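/- Main theorem, implication (e)⇒(d): if the dimension vector of a separated affine type A bow diagram as above is realized by some supersymmetric affine D3-brane configuration M, then the diagram satisfies the supersymmetry inequalities: cD^t_{s,k} ≥ 0 and aD^t_{n+1-s,w+1-k} ≥ 0 for all t ≥ 1, s ∈ {0,...,n}, k ∈ {0,...,w}. -/

import Mathlib

open Finset

lemma modHit (N p i j : ℕ) (hp : p < N) (hi : i < N) (hj : j < N) :
    (p + j) % N = i ↔ j = (N + i - p) % N := by
  have hbase : (p + (N + i - p) % N) % N = i := by
    rw [Nat.add_mod_mod]
    have h1 : p + (N + i - p) = N + i := by omega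
    rw [h1, Nat.add_mod_left, Nat.mod_eq_of_lt hi]
  constructor
  · intro h
    have h2 : (p + j) % N = (p + (N + i - p) % N) % N := by rw [h, hbase]
    have h3 : j % N = ((N + i - p) % N) % N :=
      Nat.ModEq.add_left_cancel' p h2
    simpa [Nat.mod_eq_of_lt hj, Nat.mod_mod_of_dvd] using h3
  · intro h; rw [h]; exact hbase

/-- collapse a sum of indicators along a partial cyclic run -/
lemma hitSum (N p i r : ℕ) (v : ℤ) (hp : p < N) (hi : i < N) (hr : r ≤ N) :
    ∑ j ∈ Finset.range r, (if (p + j) % N = i then v else 0)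
      = if (N + i - p) % N < r then v else 0 := by
  have : ∀ j ∈ Finset.range r, (if (p + j) % N = i then v else 0)
      = (if j = (N + i - p) % N then v else 0) := by
    intro j hj
    rw [Finset.mem_range] at hj
    exact if_congr (modHit N p i j hp hi (by omega)) rfl rfl
  rw [Finset.sum_congr rfl this, Finset.sum_ite_eq' (Finset.range r) ((N + i - p) % N) fun _ => v]
  simp [Finset.mem_range]

/-- sum of `c` over one full cyclic period equals the plain sum -/
lemma rotSum (N p : ℕ) (hp : p < N) (c : ℕ → ℤ) :
    ∑ j ∈ Finset.range N, c ((p + j) % N) = ∑ i ∈ Finset.range N, c i := by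
  have key : ∀ j ∈ Finset.range N, c ((p + j) % N)
      = ∑ i ∈ Finset.range N, (if (p + j) % N = i then c i else 0) := by
    intro j hj
    rw [Finset.sum_ite_eq (Finset.range N) ((p + j) % N) c]
    simp [Nat.mod_lt _ (show 0 < N by omega)]
  rw [Finset.sum_congr rfl key, Finset.sum_comm]
  apply Finset.sum_congr rfl
  intro i hi
  rw [Finset.mem_range] at hi
  rw [hitSum N p i N (c i) hp hi le_rfl, if_pos (Nat.mod_lt _ (by omega))]

/-- decompose a cyclic run into whole periods plus a remainder -/
lemma blockSum (N : ℕ) (hN : 0 < N) (c : ℕ → ℤ) (p : ℕ) (hp : p < N) : ∀ L : ℕ,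
    ∑ j ∈ Finset.range L, c ((p + j) % N)
      = (L / N : ℕ) * (∑ i ∈ Finset.range N, c i)
        + ∑ j ∈ Finset.range (L % N), c ((p + j) % N) := by
  intro L
  induction L using Nat.strong_induction_on with
  | _ L ih =>
    rcases Nat.lt_or_ge L N with h | h
    · rw [Nat.div_eq_of_lt h, Nat.mod_eq_of_lt h]; simp
    · obtain ⟨L', rfl⟩ : ∃ L', L = N + L' := ⟨L - N, by omega⟩
      rw [Finset.range_eq_Ico,
        ← Finset.sum_Ico_consecutive _ (Nat.zero_le N) (by omega : N ≤ N + L')]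
      have h2 : ∑ j ∈ Finset.Ico N (N + L'), c ((p + j) % N)
          = ∑ j ∈ Finset.range L', c ((p + j) % N) := by
        rw [Finset.sum_Ico_eq_sum_range]
        simp only [Nat.add_sub_cancel_left]
        apply Finset.sum_congr rfl
        intro j _
        congr 1
        rw [show p + (N + j) = p + j + N by omega, Nat.add_mod_right]
      have h3 : ∑ j ∈ Finset.Ico 0 N, c ((p + j) % N) = ∑ i ∈ Finset.range N, c i := by
        rw [← Finset.range_eq_Ico]; exact rotSum N p hp c
      rw [h2, h3, ih L' (by omega)]
      have h4 : (N + L') / N = L' / N + 1 := Nat.add_div_left _ hN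
      have h5 : (N + L') % N = L' % N := by
        rw [Nat.add_comm, Nat.add_mod_right]
      rw [h4, h5]
      simp only [← Finset.range_eq_Ico, Nat.cast_add, Nat.cast_one]
      ring

lemma qDoubleAux (c : ℕ) : ∀ t : ℕ,
    2 * ∑ q ∈ Finset.range t, (q + 1 - c) = (t - c) * (t - c + 1) := by
  intro t
  induction t with
  | zero => simp
  | succ m ih =>
    rw [Finset.sum_range_succ, Nat.mul_add, ih]
    rcases Nat.lt_or_ge m c with h | h
    · have e1 : m - c = 0 := by omega
      have e2 : m + 1 - c = 0 := by omega
      rw [e1, e2]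
    · obtain ⟨d, rfl⟩ : ∃ d, m = c + d := ⟨m - c, by omega⟩
      have e1 : c + d - c = d := by omega
      have e2 : c + d + 1 - c = d + 1 := by omega
      rw [e1, e2]; ring

lemma qDouble (t c : ℕ) :
    2 * ∑ q ∈ Finset.range t, (t - q - c) = (t - c) * (t - c + 1) := by
  have hrefl : ∑ q ∈ Finset.range t, (t - q - c) = ∑ q ∈ Finset.range t, (q + 1 - c) := by
    rw [← Finset.sum_range_reflect]
    apply Finset.sum_congr rfl
    intro q hq
    rw [Finset.mem_range] at hq
    omega
  rw [hrefl, qDoubleAux]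

lemma countEval (t s k n w : ℕ) (ht : 1 ≤ t) (hs : s ≤ n) (hk : k ≤ w) :
    2 * ∑ a ∈ Finset.range n, ∑ b ∈ Finset.range w, ∑ q ∈ Finset.range t,
        (t - q - ((if a + s < n then 1 else 0) + (if k ≤ b then 1 else 0)))
      = 2 * (s * k) + 2 * (t - 1) * (s * w + k * n) + (t - 1) * (t - 2) * (w * n) := by
  have hb : ∀ x : ℕ, ∑ b ∈ Finset.range w,
        (t - (x + (if k ≤ b then 1 else 0))) * (t - (x + (if k ≤ b then 1 else 0)) + 1)
      = k * ((t - x) * (t - x + 1)) + (w - k) * ((t - (x+1)) * (t - (x+1) + 1)) := by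
    intro x
    have e1 : ∀ b ∈ Finset.range k,
        (t - (x + (if k ≤ b then 1 else 0))) * (t - (x + (if k ≤ b then 1 else 0)) + 1)
        = (t - x) * (t - x + 1) := by
      intro b hmem
      rw [Finset.mem_range] at hmem
      rw [if_neg (by omega), Nat.add_zero]
    have e2 : ∀ b ∈ Finset.Ico k w,
        (t - (x + (if k ≤ b then 1 else 0))) * (t - (x + (if k ≤ b then 1 else 0)) + 1)
        = (t - (x+1)) * (t - (x+1) + 1) := by
      intro b hmem
      rw [Finset.mem_Ico] at hmem
      rw [if_pos (by omega)]
    calc ∑ b ∈ Finset.range w,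
        (t - (x + (if k ≤ b then 1 else 0))) * (t - (x + (if k ≤ b then 1 else 0)) + 1)
        = ∑ b ∈ Finset.Ico 0 k,
            (t - (x + (if k ≤ b then 1 else 0))) * (t - (x + (if k ≤ b then 1 else 0)) + 1)
          + ∑ b ∈ Finset.Ico k w,
            (t - (x + (if k ≤ b then 1 else 0))) * (t - (x + (if k ≤ b then 1 else 0)) + 1) := by
          rw [Finset.sum_Ico_consecutive _ (Nat.zero_le k) hk, Finset.range_eq_Ico]
      _ = k * ((t - x) * (t - x + 1)) + (w - k) * ((t - (x+1)) * (t - (x+1) + 1)) := by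
          rw [← Finset.range_eq_Ico, Finset.sum_congr rfl e1, Finset.sum_congr rfl e2,
            Finset.sum_const, Finset.sum_const, Nat.card_Ico, Finset.card_range,
            smul_eq_mul, smul_eq_mul]
  have collapse : ∀ a, (∑ b ∈ Finset.range w, ∑ q ∈ Finset.range t,
        (t - q - ((if a + s < n then 1 else 0) + (if k ≤ b then 1 else 0)))) * 2
      = if a + s < n
        then k * ((t - 1) * (t - 1 + 1)) + (w - k) * ((t - 2) * (t - 2 + 1))
        else k * (t * (t + 1)) + (w - k) * ((t - 1) * (t - 1 + 1)) := by
    intro a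
    rw [mul_comm, Finset.mul_sum]
    by_cases h : a + s < n
    · simp only [if_pos h]
      calc ∑ b ∈ Finset.range w, 2 * ∑ q ∈ Finset.range t,
            (t - q - (1 + (if k ≤ b then 1 else 0)))
          = ∑ b ∈ Finset.range w,
            (t - (1 + (if k ≤ b then 1 else 0))) * (t - (1 + (if k ≤ b then 1 else 0)) + 1) :=
            Finset.sum_congr rfl fun b _ => qDouble t _
        _ = k * ((t - 1) * (t - 1 + 1)) + (w - k) * ((t - (1+1)) * (t - (1+1) + 1)) := hb 1
        _ = k * ((t - 1) * (t - 1 + 1)) + (w - k) * ((t - 2) * (t - 2 + 1)) := rfl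
    · simp only [if_neg h]
      calc ∑ b ∈ Finset.range w, 2 * ∑ q ∈ Finset.range t,
            (t - q - (0 + (if k ≤ b then 1 else 0)))
          = ∑ b ∈ Finset.range w,
            (t - (0 + (if k ≤ b then 1 else 0))) * (t - (0 + (if k ≤ b then 1 else 0)) + 1) :=
            Finset.sum_congr rfl fun b _ => qDouble t _
        _ = k * ((t - 0) * (t - 0 + 1)) + (w - k) * ((t - (0+1)) * (t - (0+1) + 1)) := hb 0
        _ = k * (t * (t + 1)) + (w - k) * ((t - 1) * (t - 1 + 1)) := by
            rw [Nat.sub_zero, Nat.zero_add]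
  have main : 2 * ∑ a ∈ Finset.range n, ∑ b ∈ Finset.range w, ∑ q ∈ Finset.range t,
        (t - q - ((if a + s < n then 1 else 0) + (if k ≤ b then 1 else 0)))
      = ∑ a ∈ Finset.range n, (if a + s < n
        then k * ((t - 1) * (t - 1 + 1)) + (w - k) * ((t - 2) * (t - 2 + 1))
        else k * (t * (t + 1)) + (w - k) * ((t - 1) * (t - 1 + 1))) := by
    rw [mul_comm, Finset.sum_mul]
    exact Finset.sum_congr rfl fun a _ => collapse a
  rw [main]
  have splitsum : ∑ a ∈ Finset.range n, (if a + s < n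
        then k * ((t - 1) * (t - 1 + 1)) + (w - k) * ((t - 2) * (t - 2 + 1))
        else k * (t * (t + 1)) + (w - k) * ((t - 1) * (t - 1 + 1)))
      = (n - s) * (k * ((t - 1) * (t - 1 + 1)) + (w - k) * ((t - 2) * (t - 2 + 1)))
        + s * (k * (t * (t + 1)) + (w - k) * ((t - 1) * (t - 1 + 1))) := by
    have e1 : ∀ a ∈ Finset.range (n - s), (if a + s < n
        then k * ((t - 1) * (t - 1 + 1)) + (w - k) * ((t - 2) * (t - 2 + 1))
        else k * (t * (t + 1)) + (w - k) * ((t - 1) * (t - 1 + 1)))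
        = k * ((t - 1) * (t - 1 + 1)) + (w - k) * ((t - 2) * (t - 2 + 1)) := by
      intro a hmem
      rw [Finset.mem_range] at hmem
      rw [if_pos (by omega)]
    have e2 : ∀ a ∈ Finset.Ico (n - s) n, (if a + s < n
        then k * ((t - 1) * (t - 1 + 1)) + (w - k) * ((t - 2) * (t - 2 + 1))
        else k * (t * (t + 1)) + (w - k) * ((t - 1) * (t - 1 + 1)))
        = k * (t * (t + 1)) + (w - k) * ((t - 1) * (t - 1 + 1)) := by
      intro a hmem
      rw [Finset.mem_Ico] at hmem
      rw [if_neg (by omega)]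
    rw [Finset.range_eq_Ico, ← Finset.sum_Ico_consecutive _ (Nat.zero_le (n - s))
      (by omega : n - s ≤ n), ← Finset.range_eq_Ico, Finset.sum_congr rfl e1,
      Finset.sum_congr rfl e2, Finset.sum_const, Finset.sum_const, Nat.card_Ico,
      Finset.card_range, smul_eq_mul, smul_eq_mul]
    congr 2
    omega
  rw [splitsum]
  obtain ⟨al, rfl⟩ : ∃ al, n = s + al := ⟨n - s, by omega⟩
  obtain ⟨bl, rfl⟩ : ∃ bl, w = k + bl := ⟨w - k, by omega⟩
  rcases Nat.lt_or_ge t 2 with h2 | h2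
  · have : t = 1 := by omega
    subst this
    simp
    ring
  · obtain ⟨u, rfl⟩ : ∃ u, t = u + 2 := ⟨t - 2, by omega⟩
    have e1 : u + 2 - 1 = u + 1 := by omega
    have e2 : u + 2 - 2 = u := by omega
    have e3 : s + al - s = al := by omega
    have e4 : k + bl - k = bl := by omega
    rw [e1, e2, e3, e4]
    ring

lemma dmod (N p i : ℕ) (hp : p < N) (hi : i < N) :
    (N + i - p) % N = if p ≤ i then i - p else N + i - p := by
  split_ifs with h
  · have e : N + i - p = N + (i - p) := by omega
    rw [e, Nat.add_mod_left, Nat.mod_eq_of_lt (by omega)]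
  · exact Nat.mod_eq_of_lt (by omega)

lemma core (N t : ℕ) (hN : 0 < N) (ht : 1 ≤ t)
    (M : ℕ × ℕ →₀ ℕ)
    (hdom : ∀ p L : ℕ, M (p, L) ≠ 0 → p < N ∧ 1 ≤ L)
    (c : ℕ → ℤ) (hc1 : ∑ i ∈ Finset.range N, c i = 1)
    (P E : Finset ℕ) (hPN : ∀ p ∈ P, p < N) (hEN : ∀ e ∈ E, e < N)
    (hPE : ∀ p, ¬(p ∈ P ∧ p ∈ E))
    (hsusy : ∀ p L : ℕ, M (p, L) ≠ 0 → p ∈ P → (p + L) % N ∈ E → M (p, L) ≤ 1)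
    (εs εk : ℕ → ℕ)
    (H1 : ∀ p r : ℕ, p < N → r < N → ¬(p ∈ P ∧ (p + r) % N ∈ E) →
        0 ≤ ∑ j ∈ Finset.range r, c ((p + j) % N))
    (H2 : ∀ p r : ℕ, p < N → 1 ≤ r → r < N → p ∈ P → (p + r) % N ∈ E →
        (εs p : ℤ) + (εk ((p + r) % N) : ℤ) - (t : ℤ)
          ≤ ∑ j ∈ Finset.range r, c ((p + j) % N)) :
    -((∑ p ∈ P, ∑ e ∈ E, ∑ q ∈ Finset.range t, (t - q - (εs p + εk e)) : ℕ) : ℤ)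
      ≤ ∑ pL ∈ M.support, (M pL : ℤ) * ∑ j ∈ Finset.range pL.2, c ((pL.1 + j) % N) := by
  classical
  set defect : ℕ × ℕ → ℕ := fun pL =>
    if pL.1 ∈ P ∧ (pL.1 + pL.2) % N ∈ E
    then t - pL.2 / N - (εs pL.1 + εk ((pL.1 + pL.2) % N)) else 0 with hdefect
  -- pointwise bound
  have key : ∀ pL ∈ M.support,
      -((defect pL : ℕ) : ℤ) ≤ (M pL : ℤ) * ∑ j ∈ Finset.range pL.2, c ((pL.1 + j) % N) := by
    rintro ⟨p, L⟩ hmem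
    have hM0 : M (p, L) ≠ 0 := Finsupp.mem_support_iff.mp hmem
    obtain ⟨hp, hL⟩ := hdom p L hM0
    have hmm : (p + L % N) % N = (p + L) % N := Nat.add_mod_mod p L N
    have hbs := blockSum N hN c p hp L
    rw [hc1, mul_one] at hbs
    by_cases hbad : p ∈ P ∧ (p + L) % N ∈ E
    · have hM1 : M (p, L) = 1 :=
        le_antisymm (hsusy p L hM0 hbad.1 hbad.2) (Nat.one_le_iff_ne_zero.mpr hM0)
      have hr1 : 1 ≤ L % N := by
        by_contra hcon
        have h0 : L % N = 0 := by omega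
        have : (p + L) % N = p := by
          rw [← hmm, h0, Nat.add_zero, Nat.mod_eq_of_lt hp]
        exact hPE p ⟨hbad.1, this ▸ hbad.2⟩
      have h2 := H2 p (L % N) hp hr1 (Nat.mod_lt _ hN) hbad.1 (by rw [hmm]; exact hbad.2)
      rw [hmm] at h2
      have hdval : defect (p, L) = t - L / N - (εs p + εk ((p + L) % N)) := by
        simp only [hdefect, if_pos hbad]
      have hFlow : ((L / N : ℕ) : ℤ) + ((εs p : ℤ) + (εk ((p + L) % N) : ℤ) - (t : ℤ))
          ≤ ∑ j ∈ Finset.range L, c ((p + j) % N) := by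
        rw [hbs]
        exact (add_le_add_iff_left _).mpr h2
      have hcast : -((defect (p, L) : ℕ) : ℤ)
          ≤ ((L / N : ℕ) : ℤ) + ((εs p : ℤ) + (εk ((p + L) % N) : ℤ) - (t : ℤ)) := by
        rw [hdval]
        omega
      calc -((defect (p, L) : ℕ) : ℤ)
          ≤ ∑ j ∈ Finset.range L, c ((p + j) % N) := le_trans hcast hFlow
        _ = (M (p, L) : ℤ) * ∑ j ∈ Finset.range L, c ((p + j) % N) := by
            rw [hM1]; push_cast; rw [one_mul]
    · have hdval : defect (p, L) = 0 := by simp only [hdefect, if_neg hbad]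
      rw [hdval]
      simp only [Nat.cast_zero, neg_zero]
      apply mul_nonneg (by positivity)
      rw [hbs]
      have hnb' : ¬(p ∈ P ∧ (p + L % N) % N ∈ E) := by rw [hmm]; exact hbad
      have := H1 p (L % N) hp (Nat.mod_lt _ hN) hnb'
      positivity
  -- sum the pointwise bounds
  have sum1 : -(∑ pL ∈ M.support, ((defect pL : ℕ) : ℤ))
      ≤ ∑ pL ∈ M.support, (M pL : ℤ) * ∑ j ∈ Finset.range pL.2, c ((pL.1 + j) % N) := by
    rw [← Finset.sum_neg_distrib]
    exact Finset.sum_le_sum key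
  -- bound the defect sum by the full count
  have sum2 : ∑ pL ∈ M.support, defect pL
      ≤ ∑ p ∈ P, ∑ e ∈ E, ∑ q ∈ Finset.range t, (t - q - (εs p + εk e)) := by
    set T : Finset (ℕ × ℕ × ℕ) := P ×ˢ E ×ˢ Finset.range t with hT
    set φ : ℕ × ℕ × ℕ → ℕ × ℕ := fun x => (x.1, N * x.2.2 + (N + x.2.1 - x.1) % N) with hφ
    have hmemT : ∀ x ∈ T, x.1 ∈ P ∧ x.2.1 ∈ E ∧ x.2.2 < t := by
      intro x hx
      rw [hT, Finset.mem_product, Finset.mem_product, Finset.mem_range] at hx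
      exact ⟨hx.1, hx.2.1, hx.2.2⟩
    have hdlt : ∀ e p : ℕ, (N + e - p) % N < N := fun e p => Nat.mod_lt _ hN
    have hdiv : ∀ q d : ℕ, d < N → (N * q + d) / N = q := by
      intro q d hd
      rw [Nat.mul_add_div hN, Nat.div_eq_of_lt hd, Nat.add_zero]
    have hmod : ∀ q d : ℕ, d < N → (N * q + d) % N = d := by
      intro q d hd
      rw [Nat.mul_add_mod, Nat.mod_eq_of_lt hd]
    have hend : ∀ p e q : ℕ, p < N → e < N →
        (p + (N * q + (N + e - p) % N)) % N = e := by
      intro p e q hp he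
      have h1 : p + (N * q + (N + e - p) % N) = N * q + (p + (N + e - p) % N) := by omega
      rw [h1, Nat.mul_add_mod]
      have h2 : (p + (N + e - p) % N) % N = e :=
        (modHit N p e ((N + e - p) % N) hp he (hdlt e p)).mpr rfl
      exact h2
    have hval : ∀ x ∈ T, defect (φ x) = t - x.2.2 - (εs x.1 + εk x.2.1) := by
      rintro ⟨p, e, q⟩ hx
      obtain ⟨hp', he', hq'⟩ := hmemT _ hx
      have hp : p < N := hPN p hp'
      have he : e < N := hEN e he'
      simp only [hφ, hdefect]
      rw [hend p e q hp he, hdiv q _ (hdlt e p), if_pos ⟨hp', he'⟩]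
    have hinj : Set.InjOn φ T := by
      rintro ⟨p, e, q⟩ hx ⟨p', e', q'⟩ hy hxy
      obtain ⟨hp', he', hq'⟩ := hmemT _ hx
      obtain ⟨hp2', he2', hq2'⟩ := hmemT _ hy
      have hp : p < N := hPN p hp'
      have he : e < N := hEN e he'
      have hp2 : p' < N := hPN p' hp2'
      have he2 : e' < N := hEN e' he2'
      simp only [hφ, Prod.mk.injEq] at hxy
      obtain ⟨hpp, hrest⟩ := hxy
      subst hpp
      have hq : q = q' := by
        have h1 := hdiv q _ (hdlt e p)
        have h2 := hdiv q' _ (hdlt e' p)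
        rw [hrest] at h1
        exact h1.symm.trans h2
      subst hq
      have hd : (N + e - p) % N = (N + e' - p) % N := by omega
      have h1 : (p + (N + e - p) % N) % N = e :=
        (modHit N p e ((N + e - p) % N) hp he (hdlt e p)).mpr rfl
      have h2 : (p + (N + e' - p) % N) % N = e' :=
        (modHit N p e' ((N + e' - p) % N) hp he2 (hdlt e' p)).mpr rfl
      rw [hd] at h1
      rw [h1] at h2
      simp [h2]
    have hsub : M.support.filter (fun pL => defect pL ≠ 0) ⊆ T.image φ := by
      intro pL hpL
      rw [Finset.mem_filter] at hpL
      obtain ⟨hmem, hne⟩ := hpL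
      obtain ⟨p, L⟩ := pL
      have hM0 : M (p, L) ≠ 0 := Finsupp.mem_support_iff.mp hmem
      obtain ⟨hp, hL⟩ := hdom p L hM0
      have hcond : p ∈ P ∧ (p + L) % N ∈ E := by
        by_contra hcon
        simp only [hdefect, if_neg hcon] at hne
        exact hne rfl
      have hqlt : L / N < t := by
        by_contra hcon
        simp only [hdefect, if_pos hcond] at hne
        omega
      set e := (p + L) % N with hee
      have he : e < N := Nat.mod_lt _ hN
      have hr1 : 1 ≤ L % N := by
        by_contra hcon
        have h0 : L % N = 0 := by omega
        have hmm : (p + L) % N = p := by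
          rw [← Nat.add_mod_mod p L N, h0, Nat.add_zero, Nat.mod_eq_of_lt hp]
        exact hPE p ⟨hcond.1, hmm ▸ hcond.2⟩
      have hrd : L % N = (N + e - p) % N := by
        have hr : (p + L % N) % N = e := by rw [Nat.add_mod_mod]
        exact (modHit N p e (L % N) hp he (Nat.mod_lt _ hN)).mp hr
      rw [Finset.mem_image]
      refine ⟨(p, e, L / N), ?_, ?_⟩
      · rw [hT, Finset.mem_product, Finset.mem_product, Finset.mem_range]
        exact ⟨hcond.1, hcond.2, hqlt⟩
      · simp only [hφ]
        rw [← hrd, Nat.div_add_mod]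
    calc ∑ pL ∈ M.support, defect pL
        = ∑ pL ∈ M.support.filter (fun pL => defect pL ≠ 0), defect pL :=
          (Finset.sum_filter_ne_zero _).symm
      _ ≤ ∑ pL ∈ T.image φ, defect pL :=
          Finset.sum_le_sum_of_subset hsub
      _ = ∑ x ∈ T, defect (φ x) := Finset.sum_image (fun x hx y hy h => hinj hx hy h)
      _ = ∑ x ∈ T, (t - x.2.2 - (εs x.1 + εk x.2.1)) := Finset.sum_congr rfl hval
      _ = ∑ p ∈ P, ∑ e ∈ E, ∑ q ∈ Finset.range t, (t - q - (εs p + εk e)) := by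
          rw [Finset.sum_product]
          exact Finset.sum_congr rfl fun p _ => by rw [Finset.sum_product]
  have : (∑ pL ∈ M.support, ((defect pL : ℕ) : ℤ))
      ≤ ((∑ p ∈ P, ∑ e ∈ E, ∑ q ∈ Finset.range t, (t - q - (εs p + εk e)) : ℕ) : ℤ) := by
    rw [← Nat.cast_sum]
    exact_mod_cast sum2
  linarith [sum1, this]

lemma sumIndic (N j : ℕ) (hj : j < N) (v : ℤ) (X : ℕ → ℤ) :
    ∑ i ∈ Finset.range N, (if i = j then v else 0) * X i = v * X j := by
  simp only [ite_mul, zero_mul]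
  rw [Finset.sum_ite_eq' (Finset.range N) j (fun i => v * X i)]
  simp [hj]

lemma quadSum (N j1 j2 j3 j4 : ℕ) (h1 : j1 < N) (h2 : j2 < N) (h3 : j3 < N) (h4 : j4 < N)
    (v1 v2 v3 v4 : ℤ) (X : ℕ → ℤ) :
    ∑ i ∈ Finset.range N, ((if i = j1 then v1 else 0) + (if i = j2 then v2 else 0)
      + (if i = j3 then v3 else 0) + (if i = j4 then v4 else 0)) * X i
    = v1 * X j1 + v2 * X j2 + v3 * X j3 + v4 * X j4 := by
  simp only [add_mul]
  rw [Finset.sum_add_distrib, Finset.sum_add_distrib, Finset.sum_add_distrib,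
    sumIndic N j1 h1, sumIndic N j2 h2, sumIndic N j3 h3, sumIndic N j4 h4]

lemma quadRun (N p r j1 j2 j3 j4 : ℕ) (hp : p < N) (hr : r ≤ N)
    (h1 : j1 < N) (h2 : j2 < N) (h3 : j3 < N) (h4 : j4 < N) (v1 v2 v3 v4 : ℤ) :
    ∑ j ∈ Finset.range r, ((if (p + j) % N = j1 then v1 else 0)
      + (if (p + j) % N = j2 then v2 else 0) + (if (p + j) % N = j3 then v3 else 0)
      + (if (p + j) % N = j4 then v4 else 0))
    = (if (N + j1 - p) % N < r then v1 else 0) + (if (N + j2 - p) % N < r then v2 else 0)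
      + (if (N + j3 - p) % N < r then v3 else 0) + (if (N + j4 - p) % N < r then v4 else 0) := by
  rw [Finset.sum_add_distrib, Finset.sum_add_distrib, Finset.sum_add_distrib,
    hitSum N p j1 r v1 hp h1 hr, hitSum N p j2 r v2 hp h2 hr,
    hitSum N p j3 r v3 hp h3 hr, hitSum N p j4 r v4 hp h4 hr]

lemma realize (n w : ℕ) (hN : 0 < n + w) (va vx : ℕ → ℤ) (M : ℕ × ℕ →₀ ℕ)
    (hreal : ∀ i : ℕ, i < n + w →
      (if i < w then vx (i + 1) else va (n + w - 1 - i)) =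
        ((M.sum fun pL m =>
          m * ((Finset.range pL.2).filter fun τ => (pL.1 + τ) % (n + w) = i).card : ℕ) :
          ℤ))
    (c : ℕ → ℤ) :
    ∑ i ∈ Finset.range (n + w), c i * (if i < w then vx (i + 1) else va (n + w - 1 - i))
      = ∑ pL ∈ M.support, (M pL : ℤ) * ∑ j ∈ Finset.range pL.2, c ((pL.1 + j) % (n + w)) := by
  have step1 : ∑ i ∈ Finset.range (n + w), c i * (if i < w then vx (i + 1) else va (n + w - 1 - i))
      = ∑ i ∈ Finset.range (n + w), c i *
          ∑ pL ∈ M.support, (M pL : ℤ)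
            * (((Finset.range pL.2).filter fun τ => (pL.1 + τ) % (n + w) = i).card : ℤ) := by
    refine Finset.sum_congr rfl fun i hi => ?_
    rw [Finset.mem_range] at hi
    rw [hreal i hi, Finsupp.sum]
    push_cast
    rfl
  have inner : ∀ p L : ℕ, ∑ i ∈ Finset.range (n + w),
        c i * (((Finset.range L).filter fun τ => (p + τ) % (n + w) = i).card : ℤ)
      = ∑ j ∈ Finset.range L, c ((p + j) % (n + w)) := by
    intro p L
    have e1 : ∀ i ∈ Finset.range (n + w),
        c i * (((Finset.range L).filter fun τ => (p + τ) % (n + w) = i).card : ℤ)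
        = ∑ τ ∈ Finset.range L, (if (p + τ) % (n + w) = i then c i else 0) := by
      intro i _
      rw [Finset.card_filter]
      push_cast
      rw [Finset.mul_sum]
      refine Finset.sum_congr rfl fun τ _ => ?_
      split_ifs <;> ring
    rw [Finset.sum_congr rfl e1, Finset.sum_comm]
    refine Finset.sum_congr rfl fun τ _ => ?_
    rw [Finset.sum_ite_eq (Finset.range (n + w)) ((p + τ) % (n + w)) c]
    simp [Nat.mod_lt _ hN]
  calc ∑ i ∈ Finset.range (n + w), c i * (if i < w then vx (i + 1) else va (n + w - 1 - i))
      = ∑ i ∈ Finset.range (n + w), ∑ pL ∈ M.support, (M pL : ℤ)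
          * (c i * (((Finset.range pL.2).filter fun τ => (pL.1 + τ) % (n + w) = i).card : ℤ)) := by
        rw [step1]
        refine Finset.sum_congr rfl fun i _ => ?_
        rw [Finset.mul_sum]
        refine Finset.sum_congr rfl fun pL _ => ?_
        ring
    _ = ∑ pL ∈ M.support, ∑ i ∈ Finset.range (n + w), (M pL : ℤ)
          * (c i * (((Finset.range pL.2).filter fun τ => (pL.1 + τ) % (n + w) = i).card : ℤ)) :=
        Finset.sum_comm
    _ = ∑ pL ∈ M.support, (M pL : ℤ) * ∑ j ∈ Finset.range pL.2, c ((pL.1 + j) % (n + w)) := by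
        refine Finset.sum_congr rfl fun pL _ => ?_
        rw [← Finset.mul_sum, inner pL.1 pL.2]


set_option maxHeartbeats 1000000 in
lemma H1c (n w t s k j2 p r : ℕ) (ht : 1 ≤ t) (hn : 1 ≤ n) (hw : 1 ≤ w)
    (hs : s ≤ n) (hk : k ≤ w) (hp : p < n + w) (hr : r < n + w)
    (hj2 : (k = 0 ∧ j2 = n + w - 1) ∨ (1 ≤ k ∧ j2 = k - 1))
    (hnb : ¬((w ≤ p ∧ p < n + w) ∧ (if p + r < n + w then p + r else p + r - (n + w)) < w)) :
    0 ≤ (if (if p ≤ n + w - 1 - s then n + w - 1 - s - p else n + w + (n + w - 1 - s) - p) < r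
          then (1 : ℤ) else 0)
      + (if (if p ≤ j2 then j2 - p else n + w + j2 - p) < r then (1 : ℤ) else 0)
      + (if (if p ≤ w - 1 then w - 1 - p else n + w + (w - 1) - p) < r then (t : ℤ) - 1 else 0)
      + (if (if p ≤ n + w - 1 then n + w - 1 - p else n + w + (n + w - 1) - p) < r
          then -(t : ℤ) else 0) := by
  rcases hj2 with ⟨hk0, hj⟩ | ⟨hk1, hj⟩ <;> subst hj <;> split_ifs at hnb ⊢ <;> omega


set_option maxHeartbeats 1000000 in
lemma H2c (n w t s k j2 p r : ℕ) (ht : 1 ≤ t) (hn : 1 ≤ n) (hw : 1 ≤ w)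
    (hs : s ≤ n) (hk : k ≤ w) (hp : p < n + w) (hr1 : 1 ≤ r) (hr : r < n + w)
    (hj2 : (k = 0 ∧ j2 = n + w - 1) ∨ (1 ≤ k ∧ j2 = k - 1))
    (hpP : w ≤ p) (hge : n + w ≤ p + r) (heE : p + r - (n + w) < w) :
    (if p + s < n + w then (1 : ℤ) else 0)
      + (if k ≤ p + r - (n + w) then (1 : ℤ) else 0) - (t : ℤ)
      ≤ (if (if p ≤ n + w - 1 - s then n + w - 1 - s - p else n + w + (n + w - 1 - s) - p) < r
          then (1 : ℤ) else 0)
      + (if (if p ≤ j2 then j2 - p else n + w + j2 - p) < r then (1 : ℤ) else 0)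
      + (if (if p ≤ w - 1 then w - 1 - p else n + w + (w - 1) - p) < r then (t : ℤ) - 1 else 0)
      + (if (if p ≤ n + w - 1 then n + w - 1 - p else n + w + (n + w - 1) - p) < r
          then -(t : ℤ) else 0) := by
  rcases hj2 with ⟨hk0, hj⟩ | ⟨hk1, hj⟩ <;> subst hj <;> split_ifs <;> omega

set_option maxHeartbeats 1000000 in
lemma partC (n w : ℕ) (hn : 1 ≤ n) (hw : 1 ≤ w)
    (va vx : ℕ → ℤ) (hvx0 : vx 0 = va 0) (hvnw : vx w = va n)
    (M : ℕ × ℕ →₀ ℕ)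
    (hdom : ∀ p L : ℕ, M (p, L) ≠ 0 → p < n + w ∧ 1 ≤ L)
    (hsusyM : ∀ p L : ℕ, p < n + w → 1 ≤ L →
      Xor' (p < w) ((p + L) % (n + w) < w) → M (p, L) ≤ 1)
    (hreal : ∀ i : ℕ, i < n + w →
      (if i < w then vx (i + 1) else va (n + w - 1 - i)) =
        ((M.sum fun pL m =>
          m * ((Finset.range pL.2).filter fun τ => (pL.1 + τ) % (n + w) = i).card : ℕ) :
          ℤ))
    (t s k : ℕ) (ht : 1 ≤ t) (hs : s ≤ n) (hk : k ≤ w) :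
    0 ≤ (s : ℤ) * k + ((t : ℤ) - 1) * ((s : ℤ) * w + (k : ℤ) * n)
        + ((t : ℤ) - 1) * ((t : ℤ) - 2) / 2 * w * n
        + va s + vx k + ((t : ℤ) - 1) * vx w - (t : ℤ) * va 0 := by
  have hN : 0 < n + w := by omega
  set N := n + w with hNd
  -- the weight function
  set j1 := N - 1 - s with hj1d
  set j2 := (if k = 0 then N - 1 else k - 1) with hj2d
  set j3 := w - 1 with hj3d
  set j4 := N - 1 with hj4d
  have hlt1 : j1 < N := by omega
  have hlt2 : j2 < N := by rw [hj2d]; split_ifs <;> omega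
  have hlt3 : j3 < N := by omega
  have hlt4 : j4 < N := by omega
  set c : ℕ → ℤ := fun i => (if i = j1 then 1 else 0) + (if i = j2 then 1 else 0)
    + (if i = j3 then (t : ℤ) - 1 else 0) + (if i = j4 then -(t : ℤ) else 0) with hcd
  have hc1 : ∑ i ∈ Finset.range N, c i = 1 := by
    have := quadSum N j1 j2 j3 j4 hlt1 hlt2 hlt3 hlt4 1 1 ((t : ℤ) - 1) (-(t : ℤ))
      (fun _ => 1)
    simp only [mul_one] at this
    rw [hcd]
    rw [this]
    ring
  -- value of the weighted dimension sum
  have S1 : ∑ i ∈ Finset.range N, c i * (if i < w then vx (i + 1) else va (n + w - 1 - i))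
      = va s + vx k + ((t : ℤ) - 1) * vx w - (t : ℤ) * va 0 := by
    set G : ℕ → ℤ := fun i => if i < w then vx (i + 1) else va (n + w - 1 - i) with hGd
    have hq := quadSum N j1 j2 j3 j4 hlt1 hlt2 hlt3 hlt4 1 1 ((t : ℤ) - 1) (-(t : ℤ)) G
    rw [hcd]
    rw [hq]
    have hG1 : G j1 = va s := by
      rw [hGd, hj1d, hj4d]
      rcases Nat.lt_or_ge (N - 1 - s) w with h | h
      · have hsn : s = n := by omega
        have he : N - 1 - s + 1 = w := by omega
        simp only [if_pos h, he]
        rw [hvnw, hsn]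
      · have he : n + w - 1 - (N - 1 - s) = s := by omega
        simp only [if_neg (by omega : ¬ N - 1 - s < w), he]
    have hG2 : G j2 = vx k := by
      rw [hGd, hj2d, hj4d]
      by_cases h0 : k = 0
      · have he : n + w - 1 - (N - 1) = 0 := by omega
        simp only [if_pos h0, if_neg (by omega : ¬ N - 1 < w), he]
        rw [← hvx0, h0]
      · have he : k - 1 + 1 = k := by omega
        simp only [if_neg h0, if_pos (by omega : k - 1 < w), he]
    have hG3 : G j3 = vx w := by
      have he : w - 1 + 1 = w := by omega
      rw [hGd, hj3d]
      simp only [if_pos (by omega : w - 1 < w), he]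
    have hG4 : G j4 = va 0 := by
      have he : n + w - 1 - (N - 1) = 0 := by omega
      rw [hGd, hj4d]
      simp only [if_neg (by omega : ¬ N - 1 < w), he]
    rw [hG1, hG2, hG3, hG4]
    ring
  -- realization
  have S2 := realize n w hN va vx M hreal c
  -- the two pointwise lemmas
  have hmodval : ∀ p r : ℕ, p < N → r < N →
      (p + r) % N = if p + r < N then p + r else p + r - N := by
    intro p r hp hr
    split_ifs with h
    · exact Nat.mod_eq_of_lt h
    · rw [Nat.mod_eq_sub_mod (by omega)]
      exact Nat.mod_eq_of_lt (by omega)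
  have hj2or : (k = 0 ∧ j2 = n + w - 1) ∨ (1 ≤ k ∧ j2 = k - 1) := by
    rcases Nat.eq_zero_or_pos k with h0 | h0
    · exact Or.inl ⟨h0, by rw [hj2d, if_pos h0]⟩
    · exact Or.inr ⟨h0, by rw [hj2d, if_neg (by omega)]⟩
  have H1 : ∀ p r : ℕ, p < N → r < N →
      ¬(p ∈ Finset.Ico w N ∧ (p + r) % N ∈ Finset.range w) →
      0 ≤ ∑ j ∈ Finset.range r, c ((p + j) % N) := by
    intro p r hp hr hnb
    simp only [Finset.mem_Ico, Finset.mem_range] at hnb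
    rw [hmodval p r hp hr] at hnb
    simp only [hcd]
    rw [quadRun N p r j1 j2 j3 j4 hp (le_of_lt hr) hlt1 hlt2 hlt3 hlt4,
      dmod N p j1 hp hlt1, dmod N p j2 hp hlt2, dmod N p j3 hp hlt3, dmod N p j4 hp hlt4]
    exact H1c n w t s k j2 p r ht hn hw hs hk hp hr hj2or hnb
  have H2 : ∀ p r : ℕ, p < N → 1 ≤ r → r < N → p ∈ Finset.Ico w N →
      (p + r) % N ∈ Finset.range w →
      (((if p + s < N then 1 else 0 : ℕ)) : ℤ)
        + (((if k ≤ (p + r) % N then 1 else 0 : ℕ)) : ℤ) - (t : ℤ)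
        ≤ ∑ j ∈ Finset.range r, c ((p + j) % N) := by
    intro p r hp hr1 hr hpP heE
    simp only [Finset.mem_Ico] at hpP
    simp only [Finset.mem_range] at heE
    have hge : N ≤ p + r := by
      by_contra hcon
      rw [Nat.mod_eq_of_lt (by omega)] at heE
      omega
    have hmod2 : (p + r) % N = p + r - N := by
      rw [Nat.mod_eq_sub_mod hge]
      exact Nat.mod_eq_of_lt (by omega)
    rw [hmod2] at heE ⊢
    simp only [hcd]
    rw [quadRun N p r j1 j2 j3 j4 hp (le_of_lt hr) hlt1 hlt2 hlt3 hlt4,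
      dmod N p j1 hp hlt1, dmod N p j2 hp hlt2, dmod N p j3 hp hlt3, dmod N p j4 hp hlt4]
    simp only [apply_ite (fun x : ℕ => (x : ℤ)), Nat.cast_one, Nat.cast_zero]
    exact H2c n w t s k j2 p r ht hn hw hs hk hp hr1 hr hj2or hpP.1 hge heE
  -- apply the core estimate
  have CORE := core N t hN ht M hdom c hc1 (Finset.Ico w N) (Finset.range w)
    (fun p hp => (Finset.mem_Ico.mp hp).2)
    (fun e he => by rw [Finset.mem_range] at he; omega)
    (fun p hcon => by
      rw [Finset.mem_Ico, Finset.mem_range] at hcon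
      omega)
    (fun p L hM0 hpP heE => by
      obtain ⟨hp, hL⟩ := hdom p L hM0
      rw [Finset.mem_Ico] at hpP
      rw [Finset.mem_range] at heE
      exact hsusyM p L hp hL (Or.inr ⟨heE, by omega⟩))
    (fun p => if p + s < N then 1 else 0) (fun e => if k ≤ e then 1 else 0)
    H1 H2
  -- evaluate the count
  set K : ℕ := ∑ p ∈ Finset.Ico w N, ∑ e ∈ Finset.range w, ∑ q ∈ Finset.range t,
    (t - q - ((if p + s < N then 1 else 0) + (if k ≤ e then 1 else 0))) with hKd
  have hre : K = ∑ a ∈ Finset.range n, ∑ e ∈ Finset.range w, ∑ q ∈ Finset.range t,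
      (t - q - ((if a + s < n then 1 else 0) + (if k ≤ e then 1 else 0))) := by
    rw [hKd, Finset.sum_Ico_eq_sum_range]
    have hnn : N - w = n := by omega
    rw [hnn]
    refine Finset.sum_congr rfl fun a _ => ?_
    refine Finset.sum_congr rfl fun e _ => ?_
    refine Finset.sum_congr rfl fun q _ => ?_
    rw [show ((if w + a + s < N then 1 else 0 : ℕ)) = (if a + s < n then 1 else 0 : ℕ) from
      if_congr (by omega) rfl rfl]
  have h2K : 2 * K = 2 * (s * k) + 2 * (t - 1) * (s * w + k * n) + (t - 1) * (t - 2) * (w * n) := by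
    rw [hre]
    exact countEval t s k n w ht hs hk
  have hcastK : 2 * (K : ℤ) = 2 * ((s : ℤ) * k) + 2 * ((t : ℤ) - 1) * ((s : ℤ) * w + (k : ℤ) * n)
      + ((t : ℤ) - 1) * ((t : ℤ) - 2) * ((w : ℤ) * n) := by
    have h2K' : ((2 * K : ℕ) : ℤ)
        = ((2 * (s * k) + 2 * (t - 1) * (s * w + k * n) + (t - 1) * (t - 2) * (w * n) : ℕ) : ℤ) :=
      congrArg _ h2K
    rcases Nat.lt_or_ge t 2 with h2t | h2t
    · have ht1 : t = 1 := by omega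
      subst ht1
      push_cast at h2K' ⊢
      simp at h2K' ⊢
      linarith
    · obtain ⟨u, rfl⟩ : ∃ u, t = u + 2 := ⟨t - 2, by omega⟩
      have e1 : u + 2 - 1 = u + 1 := by omega
      have e2 : u + 2 - 2 = u := by omega
      rw [e1, e2] at h2K'
      push_cast at h2K' ⊢
      linarith
  have hdvd : (2 : ℤ) ∣ ((t : ℤ) - 1) * ((t : ℤ) - 2) := by
    have hev : Even (((t : ℤ) - 2) * (((t : ℤ) - 2) + 1)) := Int.even_mul_succ_self _
    have : ((t : ℤ) - 2) * (((t : ℤ) - 2) + 1) = ((t : ℤ) - 1) * ((t : ℤ) - 2) := by ring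
    rw [this] at hev
    exact hev.two_dvd
  have hdiv : ((t : ℤ) - 1) * ((t : ℤ) - 2) / 2 * 2 = ((t : ℤ) - 1) * ((t : ℤ) - 2) :=
    Int.ediv_mul_cancel hdvd
  have hKZ : (K : ℤ) = (s : ℤ) * k + ((t : ℤ) - 1) * ((s : ℤ) * w + (k : ℤ) * n)
      + ((t : ℤ) - 1) * ((t : ℤ) - 2) / 2 * w * n := by
    have h2 : 2 * (K : ℤ) = 2 * ((s : ℤ) * k + ((t : ℤ) - 1) * ((s : ℤ) * w + (k : ℤ) * n)
        + ((t : ℤ) - 1) * ((t : ℤ) - 2) / 2 * w * n) := by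
      rw [hcastK]
      linear_combination (-((w : ℤ) * n)) * hdiv
    exact mul_left_cancel₀ two_ne_zero h2
  rw [S2] at S1
  linarith [CORE, S1, hKZ]

set_option maxHeartbeats 1000000 in
lemma H1a (n w t s k j2 p r : ℕ) (ht : 1 ≤ t) (hn : 1 ≤ n) (hw : 1 ≤ w)
    (hs : s ≤ n) (hk : k ≤ w) (hp : p < n + w) (hr : r < n + w)
    (hj2 : (k = w ∧ j2 = n + w - 1) ∨ (k < w ∧ j2 = w - 1 - k))
    (hnb : ¬(p < w ∧ (w ≤ (if p + r < n + w then p + r else p + r - (n + w)) ∧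
      (if p + r < n + w then p + r else p + r - (n + w)) < n + w))) :
    0 ≤ (if (if p ≤ w - 1 + s then w - 1 + s - p else n + w + (w - 1 + s) - p) < r
          then (1 : ℤ) else 0)
      + (if (if p ≤ j2 then j2 - p else n + w + j2 - p) < r then (1 : ℤ) else 0)
      + (if (if p ≤ n + w - 1 then n + w - 1 - p else n + w + (n + w - 1) - p) < r
          then (t : ℤ) - 1 else 0)
      + (if (if p ≤ w - 1 then w - 1 - p else n + w + (w - 1) - p) < r then -(t : ℤ) else 0) := by
  rcases hj2 with ⟨hk0, hj⟩ | ⟨hk1, hj⟩ <;> subst hj <;> split_ifs at hnb ⊢ <;> omega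

set_option maxHeartbeats 1000000 in
lemma H2a (n w t s k j2 p r : ℕ) (ht : 1 ≤ t) (hn : 1 ≤ n) (hw : 1 ≤ w)
    (hs : s ≤ n) (hk : k ≤ w) (hp : p < n + w) (hr1 : 1 ≤ r) (hr : r < n + w)
    (hj2 : (k = w ∧ j2 = n + w - 1) ∨ (k < w ∧ j2 = w - 1 - k))
    (hpP : p < w) (hlt : p + r < n + w) (heE : w ≤ p + r) :
    (if p + k < w then (1 : ℤ) else 0)
      + (if w + s ≤ p + r then (1 : ℤ) else 0) - (t : ℤ)
      ≤ (if (if p ≤ w - 1 + s then w - 1 + s - p else n + w + (w - 1 + s) - p) < r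
          then (1 : ℤ) else 0)
      + (if (if p ≤ j2 then j2 - p else n + w + j2 - p) < r then (1 : ℤ) else 0)
      + (if (if p ≤ n + w - 1 then n + w - 1 - p else n + w + (n + w - 1) - p) < r
          then (t : ℤ) - 1 else 0)
      + (if (if p ≤ w - 1 then w - 1 - p else n + w + (w - 1) - p) < r then -(t : ℤ) else 0) := by
  rcases hj2 with ⟨hk0, hj⟩ | ⟨hk1, hj⟩ <;> subst hj <;> split_ifs <;> omega

set_option maxHeartbeats 1000000 in
lemma partA (n w : ℕ) (hn : 1 ≤ n) (hw : 1 ≤ w)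
    (va vx : ℕ → ℤ) (hvx0 : vx 0 = va 0) (hvnw : vx w = va n)
    (M : ℕ × ℕ →₀ ℕ)
    (hdom : ∀ p L : ℕ, M (p, L) ≠ 0 → p < n + w ∧ 1 ≤ L)
    (hsusyM : ∀ p L : ℕ, p < n + w → 1 ≤ L →
      Xor' (p < w) ((p + L) % (n + w) < w) → M (p, L) ≤ 1)
    (hreal : ∀ i : ℕ, i < n + w →
      (if i < w then vx (i + 1) else va (n + w - 1 - i)) =
        ((M.sum fun pL m =>
          m * ((Finset.range pL.2).filter fun τ => (pL.1 + τ) % (n + w) = i).card : ℕ) :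
          ℤ))
    (t s k : ℕ) (ht : 1 ≤ t) (hs : s ≤ n) (hk : k ≤ w) :
    0 ≤ (s : ℤ) * k + ((t : ℤ) - 1) * ((s : ℤ) * w + (k : ℤ) * n)
        + ((t : ℤ) - 1) * ((t : ℤ) - 2) / 2 * w * n
        + va (n - s) + vx (w - k) + ((t : ℤ) - 1) * va 0 - (t : ℤ) * vx w := by
  have hN : 0 < n + w := by omega
  set N := n + w with hNd
  set j1 := w - 1 + s with hj1d
  set j2 := (if k = w then N - 1 else w - 1 - k) with hj2d
  set j3 := N - 1 with hj3d
  set j4 := w - 1 with hj4d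
  have hlt1 : j1 < N := by omega
  have hlt2 : j2 < N := by rw [hj2d]; split_ifs <;> omega
  have hlt3 : j3 < N := by omega
  have hlt4 : j4 < N := by omega
  set c : ℕ → ℤ := fun i => (if i = j1 then 1 else 0) + (if i = j2 then 1 else 0)
    + (if i = j3 then (t : ℤ) - 1 else 0) + (if i = j4 then -(t : ℤ) else 0) with hcd
  have hc1 : ∑ i ∈ Finset.range N, c i = 1 := by
    have := quadSum N j1 j2 j3 j4 hlt1 hlt2 hlt3 hlt4 1 1 ((t : ℤ) - 1) (-(t : ℤ))
      (fun _ => 1)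
    simp only [mul_one] at this
    rw [hcd]
    rw [this]
    ring
  have S1 : ∑ i ∈ Finset.range N, c i * (if i < w then vx (i + 1) else va (n + w - 1 - i))
      = va (n - s) + vx (w - k) + ((t : ℤ) - 1) * va 0 - (t : ℤ) * vx w := by
    set G : ℕ → ℤ := fun i => if i < w then vx (i + 1) else va (n + w - 1 - i) with hGd
    have hq := quadSum N j1 j2 j3 j4 hlt1 hlt2 hlt3 hlt4 1 1 ((t : ℤ) - 1) (-(t : ℤ)) G
    rw [hcd]
    rw [hq]
    have hG1 : G j1 = va (n - s) := by
      rw [hGd, hj1d, hj4d]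
      rcases Nat.lt_or_ge (w - 1 + s) w with h | h
      · have hs0 : s = 0 := by omega
        have he : w - 1 + s + 1 = w := by omega
        simp only [if_pos h, he]
        rw [hvnw, hs0, Nat.sub_zero]
      · have he : n + w - 1 - (w - 1 + s) = n - s := by omega
        simp only [if_neg (by omega : ¬ w - 1 + s < w), he]
    have hG2 : G j2 = vx (w - k) := by
      rw [hGd, hj2d, hj3d, hj4d]
      by_cases h0 : k = w
      · have he : n + w - 1 - (N - 1) = 0 := by omega
        simp only [if_pos h0, if_neg (by omega : ¬ N - 1 < w), he]
        rw [← hvx0, h0, Nat.sub_self]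
      · have he : w - 1 - k + 1 = w - k := by omega
        simp only [if_neg h0, if_pos (by omega : w - 1 - k < w), he]
    have hG3 : G j3 = va 0 := by
      have he : n + w - 1 - (N - 1) = 0 := by omega
      rw [hGd, hj3d]
      simp only [if_neg (by omega : ¬ N - 1 < w), he]
    have hG4 : G j4 = vx w := by
      have he : w - 1 + 1 = w := by omega
      rw [hGd, hj4d]
      simp only [if_pos (by omega : w - 1 < w), he]
    rw [hG1, hG2, hG3, hG4]
    ring
  have S2 := realize n w hN va vx M hreal c
  have hmodval : ∀ p r : ℕ, p < N → r < N →
      (p + r) % N = if p + r < N then p + r else p + r - N := by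
    intro p r hp hr
    split_ifs with h
    · exact Nat.mod_eq_of_lt h
    · rw [Nat.mod_eq_sub_mod (by omega)]
      exact Nat.mod_eq_of_lt (by omega)
  have hj2or : (k = w ∧ j2 = n + w - 1) ∨ (k < w ∧ j2 = w - 1 - k) := by
    rcases Nat.lt_or_ge k w with h0 | h0
    · exact Or.inr ⟨h0, by rw [hj2d, if_neg (by omega)]⟩
    · have : k = w := by omega
      exact Or.inl ⟨this, by rw [hj2d, if_pos this]⟩
  have H1 : ∀ p r : ℕ, p < N → r < N →
      ¬(p ∈ Finset.range w ∧ (p + r) % N ∈ Finset.Ico w N) →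
      0 ≤ ∑ j ∈ Finset.range r, c ((p + j) % N) := by
    intro p r hp hr hnb
    simp only [Finset.mem_Ico, Finset.mem_range] at hnb
    rw [hmodval p r hp hr] at hnb
    simp only [hcd]
    rw [quadRun N p r j1 j2 j3 j4 hp (le_of_lt hr) hlt1 hlt2 hlt3 hlt4,
      dmod N p j1 hp hlt1, dmod N p j2 hp hlt2, dmod N p j3 hp hlt3, dmod N p j4 hp hlt4]
    exact H1a n w t s k j2 p r ht hn hw hs hk hp hr hj2or hnb
  have H2 : ∀ p r : ℕ, p < N → 1 ≤ r → r < N → p ∈ Finset.range w →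
      (p + r) % N ∈ Finset.Ico w N →
      (((if p + k < w then 1 else 0 : ℕ)) : ℤ)
        + (((if w + s ≤ (p + r) % N then 1 else 0 : ℕ)) : ℤ) - (t : ℤ)
        ≤ ∑ j ∈ Finset.range r, c ((p + j) % N) := by
    intro p r hp hr1 hr hpP heE
    simp only [Finset.mem_range] at hpP
    simp only [Finset.mem_Ico] at heE
    have hlt : p + r < N := by
      by_contra hcon
      have hmod2 : (p + r) % N = p + r - N := by
        rw [Nat.mod_eq_sub_mod (by omega)]
        exact Nat.mod_eq_of_lt (by omega)
      rw [hmod2] at heE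
      omega
    have hmod2 : (p + r) % N = p + r := Nat.mod_eq_of_lt hlt
    rw [hmod2] at heE ⊢
    simp only [hcd]
    rw [quadRun N p r j1 j2 j3 j4 hp (le_of_lt hr) hlt1 hlt2 hlt3 hlt4,
      dmod N p j1 hp hlt1, dmod N p j2 hp hlt2, dmod N p j3 hp hlt3, dmod N p j4 hp hlt4]
    simp only [apply_ite (fun x : ℕ => (x : ℤ)), Nat.cast_one, Nat.cast_zero]
    exact H2a n w t s k j2 p r ht hn hw hs hk hp hr1 hr hj2or hpP hlt heE.1
  have CORE := core N t hN ht M hdom c hc1 (Finset.range w) (Finset.Ico w N)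
    (fun p hp => by rw [Finset.mem_range] at hp; omega)
    (fun e he => (Finset.mem_Ico.mp he).2)
    (fun p hcon => by
      rw [Finset.mem_range, Finset.mem_Ico] at hcon
      omega)
    (fun p L hM0 hpP heE => by
      obtain ⟨hp, hL⟩ := hdom p L hM0
      rw [Finset.mem_range] at hpP
      rw [Finset.mem_Ico] at heE
      exact hsusyM p L hp hL (Or.inl ⟨hpP, by omega⟩))
    (fun p => if p + k < w then 1 else 0) (fun e => if w + s ≤ e then 1 else 0)
    H1 H2
  set K : ℕ := ∑ p ∈ Finset.range w, ∑ e ∈ Finset.Ico w N, ∑ q ∈ Finset.range t,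
    (t - q - ((if p + k < w then 1 else 0) + (if w + s ≤ e then 1 else 0))) with hKd
  have hre : K = ∑ a ∈ Finset.range w, ∑ b ∈ Finset.range n, ∑ q ∈ Finset.range t,
      (t - q - ((if a + k < w then 1 else 0) + (if s ≤ b then 1 else 0))) := by
    rw [hKd]
    refine Finset.sum_congr rfl fun a _ => ?_
    rw [Finset.sum_Ico_eq_sum_range]
    have hnn : N - w = n := by omega
    rw [hnn]
    refine Finset.sum_congr rfl fun b _ => ?_
    refine Finset.sum_congr rfl fun q _ => ?_
    rw [show ((if w + s ≤ w + b then 1 else 0 : ℕ)) = (if s ≤ b then 1 else 0 : ℕ) from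
      if_congr (by omega) rfl rfl]
  have h2K : 2 * K = 2 * (k * s) + 2 * (t - 1) * (k * n + s * w) + (t - 1) * (t - 2) * (n * w) := by
    rw [hre]
    exact countEval t k s w n ht hk hs
  have hcastK : 2 * (K : ℤ) = 2 * ((k : ℤ) * s) + 2 * ((t : ℤ) - 1) * ((k : ℤ) * n + (s : ℤ) * w)
      + ((t : ℤ) - 1) * ((t : ℤ) - 2) * ((n : ℤ) * w) := by
    have h2K' : ((2 * K : ℕ) : ℤ)
        = ((2 * (k * s) + 2 * (t - 1) * (k * n + s * w) + (t - 1) * (t - 2) * (n * w) : ℕ) : ℤ) :=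
      congrArg _ h2K
    rcases Nat.lt_or_ge t 2 with h2t | h2t
    · have ht1 : t = 1 := by omega
      subst ht1
      push_cast at h2K' ⊢
      simp at h2K' ⊢
      linarith
    · obtain ⟨u, rfl⟩ : ∃ u, t = u + 2 := ⟨t - 2, by omega⟩
      have e1 : u + 2 - 1 = u + 1 := by omega
      have e2 : u + 2 - 2 = u := by omega
      rw [e1, e2] at h2K'
      push_cast at h2K' ⊢
      linarith
  have hdvd : (2 : ℤ) ∣ ((t : ℤ) - 1) * ((t : ℤ) - 2) := by
    have hev : Even (((t : ℤ) - 2) * (((t : ℤ) - 2) + 1)) := Int.even_mul_succ_self _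
    have : ((t : ℤ) - 2) * (((t : ℤ) - 2) + 1) = ((t : ℤ) - 1) * ((t : ℤ) - 2) := by ring
    rw [this] at hev
    exact hev.two_dvd
  have hdiv : ((t : ℤ) - 1) * ((t : ℤ) - 2) / 2 * 2 = ((t : ℤ) - 1) * ((t : ℤ) - 2) :=
    Int.ediv_mul_cancel hdvd
  have hKZ : (K : ℤ) = (s : ℤ) * k + ((t : ℤ) - 1) * ((s : ℤ) * w + (k : ℤ) * n)
      + ((t : ℤ) - 1) * ((t : ℤ) - 2) / 2 * w * n := by
    have h2 : 2 * (K : ℤ) = 2 * ((s : ℤ) * k + ((t : ℤ) - 1) * ((s : ℤ) * w + (k : ℤ) * n)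
        + ((t : ℤ) - 1) * ((t : ℤ) - 2) / 2 * w * n) := by
      rw [hcastK]
      linear_combination (-((w : ℤ) * n)) * hdiv
    exact mul_left_cancel₀ two_ne_zero h2
  rw [S2] at S1
  linarith [CORE, S1, hKZ]



/-- The supersymmetry inequalities for a separated affine type A bow diagram with `n` arrows
and `w` x-points, dimension vector `va s = v_s` (`0 ≤ s ≤ n`), `vx k = v_{-k}` (`0 ≤ k ≤ w`):
`cD^t_{s,k} ≥ 0` and `aD^t_{n+1-s,w+1-k} ≥ 0` for all `t ≥ 1`, `0 ≤ s ≤ n`, `0 ≤ k ≤ w`. -/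
def SatisfiesSusyIneq (n w : ℕ) (va vx : ℕ → ℤ) : Prop :=
  ∀ t s k : ℕ, 1 ≤ t → s ≤ n → k ≤ w →
    (0 ≤ (s : ℤ) * k + ((t : ℤ) - 1) * ((s : ℤ) * w + (k : ℤ) * n)
        + ((t : ℤ) - 1) * ((t : ℤ) - 2) / 2 * w * n
        + va s + vx k + ((t : ℤ) - 1) * vx w - (t : ℤ) * va 0) ∧
    (0 ≤ (s : ℤ) * k + ((t : ℤ) - 1) * ((s : ℤ) * w + (k : ℤ) * n)
        + ((t : ℤ) - 1) * ((t : ℤ) - 2) / 2 * w * n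
        + va (n - s) + vx (w - k) + ((t : ℤ) - 1) * va 0 - (t : ℤ) * vx w)

/-- **Main theorem, implication (e) ⇒ (d).**  If the dimension vector of a separated affine
type A bow diagram is realized by some supersymmetric affine D3-brane configuration `M`
(where `M (p, L)` counts D3-branes starting at point `p` of `ℤ/(n+w)`, points `0,...,w-1`
being the x-points and `w,...,n+w-1` the arrows, running anticlockwise across `L ≥ 1`
segments; supersymmetry says at most one fixed D3-brane per pair of 5-branes of different
types, orientation and winding number), then the diagram satisfies the supersymmetry
inequalities. -/
theorem supersymmetric_implies_susy_ineq
    (n w : ℕ) (hn : 1 ≤ n) (hw : 1 ≤ w)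
    (va vx : ℕ → ℤ) (hvx0 : vx 0 = va 0) (hvnw : vx w = va n)
    (M : ℕ × ℕ →₀ ℕ)
    (hdom : ∀ p L : ℕ, M (p, L) ≠ 0 → p < n + w ∧ 1 ≤ L)
    (hsusyM : ∀ p L : ℕ, p < n + w → 1 ≤ L →
      Xor' (p < w) ((p + L) % (n + w) < w) → M (p, L) ≤ 1)
    (hreal : ∀ i : ℕ, i < n + w →
      (if i < w then vx (i + 1) else va (n + w - 1 - i)) =
        ((M.sum fun pL m =>
          m * ((Finset.range pL.2).filter fun t => (pL.1 + t) % (n + w) = i).card : ℕ) :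
          ℤ)) :
    SatisfiesSusyIneq n w va vx := by
  intro t s k ht hs hk
  exact ⟨partC n w hn hw va vx hvx0 hvnw M hdom hsusyM hreal t s k ht hs hk,
    partA n w hn hw va vx hvx0 hvnw M hdom hsusyM hreal t s k ht hs hk⟩
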